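/- For the Besov-type spaces with norms ‖f‖_B = Σ_k e^{|k|/2}(∫_{I_k}‖f(y)‖²dy/y²)^{1/2} and ‖u‖_{B*} = (sup_{R>e} (1/log R)∫_{1/R}^R ‖u(y)‖² dy/y²)^{1/2}, and the weighted space L^{2,s} with norm (∫₀^∞(1+|log y|)^{2s}‖u(y)‖² dy/y²)^{1/2}, the inclusions L^{2,s} ⊂ B and B* ⊂ L^{2,-s} hold continuously for every s > 1/2. -/

import Mathlib

open MeasureTheory ENNReal

/-- The dyadic-exponential partition points of `(0,∞)`:
`bd j = exp(e^j)` for `j ≥ 0` and `bd j = exp(-e^{-j-1})` for `j ≤ -1`, so that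
`I_k = (bd (k-1), bd k]` are the intervals of the Besov decomposition. -/
noncomputable def bd (j : ℤ) : ℝ :=
  if 0 ≤ j then Real.exp (Real.exp j) else Real.exp (-Real.exp (-(j : ℝ) - 1))

/-- The Besov norm `‖f‖_B = Σ_k e^{|k|/2} (∫_{I_k} ‖f(y)‖² dy/y²)^{1/2}`. -/
noncomputable def Bnorm {E : Type*} [NormedAddCommGroup E] (f : ℝ → E) : ℝ≥0∞ :=
  ∑' k : ℤ, ENNReal.ofReal (Real.exp ((|k| : ℤ) / 2 : ℝ)) *
    (∫⁻ y in Set.Ioc (bd (k - 1)) (bd k),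
        ((‖f y‖₊ : ℝ≥0∞)) ^ 2 / ENNReal.ofReal (y ^ 2)) ^ ((1 : ℝ) / 2)

/-- The dual Besov norm
`‖u‖_{B*} = (sup_{R>e} (1/log R) ∫_{1/R}^R ‖u(y)‖² dy/y²)^{1/2}`. -/
noncomputable def Bstarnorm {E : Type*} [NormedAddCommGroup E] (u : ℝ → E) : ℝ≥0∞ :=
  (⨆ R : {R : ℝ // Real.exp 1 < R},
      ENNReal.ofReal (1 / Real.log R) *
        ∫⁻ y in Set.Ioc (1 / (R : ℝ)) (R : ℝ),
          ((‖u y‖₊ : ℝ≥0∞)) ^ 2 / ENNReal.ofReal (y ^ 2)) ^ ((1 : ℝ) / 2)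

/-- The weighted norm `‖u‖_s = (∫₀^∞ (1+|log y|)^{2s} ‖u(y)‖² dy/y²)^{1/2}`. -/
noncomputable def Lnorm {E : Type*} [NormedAddCommGroup E] (s : ℝ) (f : ℝ → E) : ℝ≥0∞ :=
  (∫⁻ y in Set.Ioi (0 : ℝ),
      ENNReal.ofReal ((1 + |Real.log y|) ^ (2 * s)) *
        ((‖f y‖₊ : ℝ≥0∞)) ^ 2 / ENNReal.ofReal (y ^ 2)) ^ ((1 : ℝ) / 2)

lemma bd_pos (j : ℤ) : 0 < bd j := by
  unfold bd; split <;> exact Real.exp_pos _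

lemma bd_strictMono : StrictMono bd := by
  apply strictMono_int_of_lt_succ
  intro j
  unfold bd
  rcases lt_trichotomy j (-1) with h | h | h
  · have h1 : ¬ (0:ℤ) ≤ j := by omega
    have h2 : ¬ (0:ℤ) ≤ j + 1 := by omega
    rw [if_neg h1, if_neg h2]
    apply Real.exp_lt_exp.2
    apply neg_lt_neg
    apply Real.exp_lt_exp.2
    push_cast
    linarith
  · subst h
    rw [if_neg (by norm_num), if_pos (by norm_num)]
    apply Real.exp_lt_exp.2
    have e1 : (-((-1:ℤ):ℝ) - 1) = 0 := by norm_num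
    have e2 : (((-1:ℤ)+1 : ℤ):ℝ) = 0 := by norm_num
    rw [e1, e2, Real.exp_zero]
    nlinarith [Real.add_one_le_exp (1:ℝ)]
  · have h1 : (0:ℤ) ≤ j := by omega
    have h2 : (0:ℤ) ≤ j + 1 := by omega
    rw [if_pos h1, if_pos h2]
    apply Real.exp_lt_exp.2
    apply Real.exp_lt_exp.2
    push_cast; linarith

lemma exists_mem_Ik {y : ℝ} (hy : 0 < y) : ∃ k : ℤ, y ∈ Set.Ioc (bd (k-1)) (bd k) := by
  set t := Real.log y with ht
  have hyt : y = Real.exp t := (Real.exp_log hy).symm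
  rcases lt_trichotomy 1 t with h1 | h1 | h1
  · -- y > e
    have ht0 : 0 < t := by linarith
    refine ⟨⌈Real.log t⌉, ?_, ?_⟩
    · have hk1 : 1 ≤ ⌈Real.log t⌉ := by
        have : 0 < Real.log t := Real.log_pos h1
        exact Int.ceil_pos.2 this
      have : (0:ℤ) ≤ ⌈Real.log t⌉ - 1 := by omega
      rw [bd, if_pos this]
      rw [hyt, Real.exp_lt_exp]
      rw [← Real.lt_log_iff_exp_lt ht0]
      push_cast
      linarith [Int.ceil_lt_add_one (Real.log t)]
    · have hk1 : 1 ≤ ⌈Real.log t⌉ := Int.ceil_pos.2 (Real.log_pos h1)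
      have : (0:ℤ) ≤ ⌈Real.log t⌉ := by omega
      rw [bd, if_pos this]
      rw [hyt, Real.exp_le_exp]
      rw [← Real.log_le_iff_le_exp ht0]
      exact Int.le_ceil _
  · refine ⟨0, ?_, ?_⟩
    · show bd (-1) < y
      rw [bd, if_neg (by norm_num)]
      rw [hyt, Real.exp_lt_exp]
      have e1 : (-((-1:ℤ):ℝ) - 1) = 0 := by norm_num
      rw [e1, Real.exp_zero]
      linarith
    · rw [bd, if_pos le_rfl]
      rw [hyt, Real.exp_le_exp]
      have e2 : ((0:ℤ):ℝ) = 0 := by norm_num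
      rw [e2, Real.exp_zero]
      nlinarith [Real.add_one_le_exp t]
  · rcases le_or_gt t (-1) with h2 | h2
    · -- y ≤ 1/e
      have hnt : 1 ≤ -t := by linarith
      have hlt0 : 0 ≤ Real.log (-t) := Real.log_nonneg hnt
      set m := ⌊Real.log (-t)⌋ with hm
      have hm0 : 0 ≤ m := Int.floor_nonneg.2 hlt0
      refine ⟨-(m+1), ?_, ?_⟩
      · have : ¬ (0:ℤ) ≤ -(m+1) - 1 := by omega
        rw [bd, if_neg this]
        rw [hyt, Real.exp_lt_exp]
        have hcast : (-(↑(-(m+1)-1) : ℝ) - 1) = (m:ℝ) + 1 := by push_cast; ring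
        rw [hcast, neg_lt]
        have h3 : Real.log (-t) < (m:ℝ) + 1 := Int.lt_floor_add_one _
        have h4 : -t = Real.exp (Real.log (-t)) := (Real.exp_log (by linarith)).symm
        rw [h4]; exact Real.exp_lt_exp.2 h3
      · have : ¬ (0:ℤ) ≤ -(m+1) := by omega
        rw [bd, if_neg this]
        rw [hyt, Real.exp_le_exp]
        have hcast : (-(↑(-(m+1)) : ℝ) - 1) = (m:ℝ) := by push_cast; ring
        rw [hcast]
        have h3 : (m:ℝ) ≤ Real.log (-t) := Int.floor_le _
        have h4 : -t = Real.exp (Real.log (-t)) := (Real.exp_log (by linarith)).symm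
        have : Real.exp (m:ℝ) ≤ -t := by rw [h4]; exact Real.exp_le_exp.2 h3
        linarith
    · refine ⟨0, ?_, ?_⟩
      · show bd (-1) < y
        rw [bd, if_neg (by norm_num)]
        rw [hyt, Real.exp_lt_exp]
        have e1 : (-((-1:ℤ):ℝ) - 1) = 0 := by norm_num
        rw [e1, Real.exp_zero]
        linarith
      · rw [bd, if_pos le_rfl]
        rw [hyt, Real.exp_le_exp]
        have e2 : ((0:ℤ):ℝ) = 0 := by norm_num
        rw [e2, Real.exp_zero]
        nlinarith [Real.add_one_le_exp (1:ℝ)]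

lemma Ik_disjoint : Pairwise (Function.onFun Disjoint fun k : ℤ => Set.Ioc (bd (k-1)) (bd k)) := by
  have key : ∀ k l : ℤ, k < l →
      Disjoint (Set.Ioc (bd (k-1)) (bd k)) (Set.Ioc (bd (l-1)) (bd l)) := by
    intro k l hkl
    apply Set.disjoint_left.2
    rintro x ⟨_, hx2⟩ ⟨hx3, _⟩
    have : bd k ≤ bd (l-1) := bd_strictMono.monotone (by omega)
    linarith
  intro k l hkl
  rcases lt_or_gt_of_ne hkl with h | h
  · exact key k l h
  · exact (key l k h).symm

lemma Ik_union : (⋃ k : ℤ, Set.Ioc (bd (k-1)) (bd k)) = Set.Ioi (0:ℝ) := by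
  ext y
  simp only [Set.mem_iUnion, Set.mem_Ioi]
  constructor
  · rintro ⟨k, hk1, _⟩
    exact lt_trans (bd_pos (k-1)) hk1
  · exact fun hy => exists_mem_Ik hy

lemma lintegral_Ioi_partition (g : ℝ → ℝ≥0∞) :
    ∫⁻ y in Set.Ioi (0:ℝ), g y = ∑' k : ℤ, ∫⁻ y in Set.Ioc (bd (k-1)) (bd k), g y := by
  rw [← Ik_union, Measure.restrict_iUnion Ik_disjoint (fun k => measurableSet_Ioc),
    lintegral_sum_measure]

lemma tsum_CS (a b : ℤ → ℝ≥0∞) :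
    ∑' k, a k * b k ≤
      (∑' k, a k ^ (2:ℝ)) ^ ((1:ℝ)/2) * (∑' k, b k ^ (2:ℝ)) ^ ((1:ℝ)/2) := by
  have h := ENNReal.lintegral_mul_le_Lp_mul_Lq (Measure.count : Measure ℤ)
    (Real.HolderConjugate.two_two : Real.HolderConjugate 2 2)
    (measurable_of_countable a).aemeasurable (measurable_of_countable b).aemeasurable
  simpa [lintegral_count] using h

lemma summable_exp_abs {c : ℝ} (hc : c < 0) (d : ℝ) :
    Summable (fun k : ℤ => Real.exp (c * |(k:ℝ)| + d)) := by
  have base : Summable (fun n : ℕ => Real.exp (c * (n:ℝ) + d)) := by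
    have : (fun n : ℕ => Real.exp (c * (n:ℝ) + d)) =
        fun n : ℕ => (Real.exp c) ^ n * Real.exp d := by
      funext n
      rw [Real.exp_add, mul_comm c, Real.exp_nat_mul]
    rw [this]
    exact (summable_geometric_of_lt_one (Real.exp_pos c).le
      (Real.exp_lt_one_iff.2 hc)).mul_right _
  apply Summable.of_nat_of_neg
  · simpa using base
  · have : ∀ n : ℕ, Real.exp (c * |((-(n:ℤ)):ℝ)| + d) = Real.exp (c * (n:ℝ) + d) := by
      intro n; push_cast; rw [abs_neg, abs_of_nonneg (Nat.cast_nonneg n)]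
    simpa [this] using base

lemma tsum_exp_abs_ne_top {c : ℝ} (hc : c < 0) (d : ℝ) :
    ∑' k : ℤ, ENNReal.ofReal (Real.exp (c * |(k:ℝ)| + d)) ≠ ⊤ := by
  rw [← ENNReal.ofReal_tsum_of_nonneg (fun k => (Real.exp_pos _).le) (summable_exp_abs hc d)]
  exact ENNReal.ofReal_ne_top

lemma weight_lb (k : ℤ) {y : ℝ} (hy : y ∈ Set.Ioc (bd (k-1)) (bd k)) :
    Real.exp (|(k:ℝ)| - 1) ≤ 1 + |Real.log y| := by
  obtain ⟨hy1, hy2⟩ := hy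
  have hy0 : 0 < y := lt_trans (bd_pos (k-1)) hy1
  rcases lt_trichotomy k 0 with hk | hk | hk
  · -- k ≤ -1 : y ≤ bd k = exp(-exp(-k-1)), so -log y ≥ exp(-k-1) = exp(|k|-1)
    have habs : |(k:ℝ)| = -(k:ℝ) := abs_of_neg (by exact_mod_cast hk)
    rw [bd, if_neg (by omega)] at hy2
    have hlog : Real.log y ≤ -Real.exp (-(k:ℝ) - 1) :=
      (Real.log_le_iff_le_exp hy0).2 hy2
    have : Real.exp (-(k:ℝ) - 1) ≤ |Real.log y| := by
      calc Real.exp (-(k:ℝ) - 1) ≤ -Real.log y := by linarith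
      _ ≤ |Real.log y| := neg_le_abs _
    rw [habs]
    calc Real.exp (-(k:ℝ) - 1) ≤ |Real.log y| := this
    _ ≤ 1 + |Real.log y| := by linarith
  · subst hk
    simp only [Int.cast_zero, abs_zero, zero_sub]
    have : Real.exp (-1) ≤ 1 := by
      rw [Real.exp_le_one_iff]; norm_num
    have := abs_nonneg (Real.log y)
    linarith
  · -- k ≥ 1: y > bd (k-1) = exp(exp(k-1)), so log y > exp(k-1) = exp(|k|-1)
    have habs : |(k:ℝ)| = (k:ℝ) := abs_of_pos (by exact_mod_cast hk)
    rw [bd, if_pos (by omega)] at hy1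
    have hlog : Real.exp ((↑(k-1):ℝ)) < Real.log y :=
      (Real.lt_log_iff_exp_lt hy0).2 hy1
    have hcast : ((↑(k-1):ℝ)) = (k:ℝ) - 1 := by push_cast; ring
    rw [habs]
    have h2 : Real.exp ((k:ℝ)-1) ≤ |Real.log y| := by
      rw [← hcast]
      exact le_trans hlog.le (le_abs_self _)
    linarith

lemma Rk_gt (k : ℤ) : Real.exp 1 < Real.exp (Real.exp (|(k:ℝ)| + 1)) := by
  apply Real.exp_lt_exp.2
  have h0 : 0 ≤ |(k:ℝ)| := abs_nonneg _
  nlinarith [Real.add_one_le_exp (|(k:ℝ)| + 1)]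

lemma Ik_subset (k : ℤ) :
    Set.Ioc (bd (k-1)) (bd k) ⊆
      Set.Ioc (1 / Real.exp (Real.exp (|(k:ℝ)| + 1))) (Real.exp (Real.exp (|(k:ℝ)| + 1))) := by
  have h0 : 0 ≤ |(k:ℝ)| := abs_nonneg _
  have hself : (k:ℝ) ≤ |(k:ℝ)| := le_abs_self _
  have hnself : -(k:ℝ) ≤ |(k:ℝ)| := neg_le_abs _
  rintro y ⟨hy1, hy2⟩
  constructor
  · -- 1/R_k < bd (k-1) ≤ ... < y
    have hlb : 1 / Real.exp (Real.exp (|(k:ℝ)| + 1)) ≤ bd (k-1) := by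
      rw [one_div, ← Real.exp_neg]
      rw [bd]
      split
      · apply Real.exp_le_exp.2
        have := Real.exp_pos (|(k:ℝ)| + 1)
        have := Real.exp_pos ((↑(k-1):ℝ))
        linarith
      · apply Real.exp_le_exp.2
        apply neg_le_neg
        apply Real.exp_le_exp.2
        push_cast; linarith
    exact lt_of_le_of_lt hlb hy1
  · -- y ≤ bd k ≤ R_k
    apply le_trans hy2
    rw [bd]
    split
    · apply Real.exp_le_exp.2
      apply Real.exp_le_exp.2
      linarith
    · apply Real.exp_le_exp.2
      have := Real.exp_pos (-(k:ℝ) - 1)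
      have := Real.exp_pos (|(k:ℝ)| + 1)
      linarith

lemma part1_besov {E : Type*} [NormedAddCommGroup E] (s : ℝ) (hs : 1 / 2 < s) (f : ℝ → E) :
    ∑' k : ℤ, ENNReal.ofReal (Real.exp ((|k| : ℤ) / 2 : ℝ)) *
      (∫⁻ y in Set.Ioc (bd (k - 1)) (bd k),
          ((‖f y‖₊ : ℝ≥0∞)) ^ 2 / ENNReal.ofReal (y ^ 2)) ^ ((1 : ℝ) / 2)
    ≤ (∑' k : ℤ, ENNReal.ofReal (Real.exp ((1-2*s) * |(k:ℝ)| + 2*s))) ^ ((1:ℝ)/2) *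
      (∫⁻ y in Set.Ioi (0 : ℝ),
        ENNReal.ofReal ((1 + |Real.log y|) ^ (2 * s)) *
          ((‖f y‖₊ : ℝ≥0∞)) ^ 2 / ENNReal.ofReal (y ^ 2)) ^ ((1 : ℝ) / 2) := by
  have hs2 : (0:ℝ) ≤ 2 * s := by linarith
  set W : ℝ → ℝ≥0∞ := fun y => ENNReal.ofReal ((1 + |Real.log y|) ^ (2 * s)) *
      ((‖f y‖₊ : ℝ≥0∞)) ^ 2 / ENNReal.ofReal (y ^ 2) with hW
  set A : ℤ → ℝ≥0∞ := fun k => ENNReal.ofReal (Real.exp (((1-2*s) * |(k:ℝ)| + 2*s)/2)) with hA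
  set B : ℤ → ℝ≥0∞ := fun k => (∫⁻ y in Set.Ioc (bd (k-1)) (bd k), W y) ^ ((1:ℝ)/2) with hB
  have key : ∀ k : ℤ, ENNReal.ofReal (Real.exp ((|k| : ℤ) / 2 : ℝ)) *
      (∫⁻ y in Set.Ioc (bd (k - 1)) (bd k),
          ((‖f y‖₊ : ℝ≥0∞)) ^ 2 / ENNReal.ofReal (y ^ 2)) ^ ((1 : ℝ) / 2) ≤ A k * B k := by
    intro k
    have hpt : ∀ y ∈ Set.Ioc (bd (k-1)) (bd k),
        ((‖f y‖₊ : ℝ≥0∞)) ^ 2 / ENNReal.ofReal (y ^ 2) ≤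
          ENNReal.ofReal (Real.exp (-(2*s)*(|(k:ℝ)|-1))) * W y := by
      intro y hy
      have hw := weight_lb k hy
      have hexp : Real.exp ((|(k:ℝ)|-1) * (2*s)) ≤ (1 + |Real.log y|) ^ (2*s) := by
        rw [Real.exp_mul]
        exact Real.rpow_le_rpow (Real.exp_pos _).le hw hs2
      have h1 : (1:ℝ≥0∞) ≤ ENNReal.ofReal (Real.exp (-(2*s)*(|(k:ℝ)|-1))) *
          ENNReal.ofReal ((1 + |Real.log y|) ^ (2*s)) := by
        rw [← ENNReal.ofReal_mul (Real.exp_pos _).le, ← ENNReal.ofReal_one]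
        apply ENNReal.ofReal_le_ofReal
        have e0 : (1:ℝ) = Real.exp (-(2*s)*(|(k:ℝ)|-1)) * Real.exp ((|(k:ℝ)|-1)*(2*s)) := by
          rw [← Real.exp_add]
          have : -(2*s)*(|(k:ℝ)|-1) + (|(k:ℝ)|-1)*(2*s) = 0 := by ring
          rw [this, Real.exp_zero]
        calc (1:ℝ) = Real.exp (-(2*s)*(|(k:ℝ)|-1)) * Real.exp ((|(k:ℝ)|-1)*(2*s)) := e0
        _ ≤ _ := mul_le_mul_of_nonneg_left hexp (Real.exp_pos _).le
      calc ((‖f y‖₊ : ℝ≥0∞)) ^ 2 / ENNReal.ofReal (y ^ 2)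
          = 1 * (((‖f y‖₊ : ℝ≥0∞)) ^ 2 / ENNReal.ofReal (y ^ 2)) := (one_mul _).symm
      _ ≤ (ENNReal.ofReal (Real.exp (-(2*s)*(|(k:ℝ)|-1))) *
            ENNReal.ofReal ((1 + |Real.log y|) ^ (2*s))) *
            (((‖f y‖₊ : ℝ≥0∞)) ^ 2 / ENNReal.ofReal (y ^ 2)) := mul_le_mul_left h1 _
      _ = ENNReal.ofReal (Real.exp (-(2*s)*(|(k:ℝ)|-1))) * W y := by
          rw [hW]; simp only [div_eq_mul_inv, mul_assoc]
    have hJ : (∫⁻ y in Set.Ioc (bd (k-1)) (bd k),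
          ((‖f y‖₊ : ℝ≥0∞)) ^ 2 / ENNReal.ofReal (y ^ 2)) ≤
        ENNReal.ofReal (Real.exp (-(2*s)*(|(k:ℝ)|-1))) *
          ∫⁻ y in Set.Ioc (bd (k-1)) (bd k), W y := by
      calc _ ≤ ∫⁻ y in Set.Ioc (bd (k-1)) (bd k),
            ENNReal.ofReal (Real.exp (-(2*s)*(|(k:ℝ)|-1))) * W y :=
          lintegral_mono_ae ((ae_restrict_of_forall_mem measurableSet_Ioc) hpt)
      _ = _ := lintegral_const_mul' _ _ ENNReal.ofReal_ne_top
    have hJ2 : (∫⁻ y in Set.Ioc (bd (k-1)) (bd k),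
          ((‖f y‖₊ : ℝ≥0∞)) ^ 2 / ENNReal.ofReal (y ^ 2)) ^ ((1:ℝ)/2) ≤
        ENNReal.ofReal (Real.exp (-(2*s)*(|(k:ℝ)|-1))) ^ ((1:ℝ)/2) * B k := by
      rw [hB, ← ENNReal.mul_rpow_of_nonneg _ _ (by norm_num : (0:ℝ) ≤ 1/2)]
      exact ENNReal.rpow_le_rpow hJ (by norm_num)
    calc ENNReal.ofReal (Real.exp ((|k| : ℤ) / 2 : ℝ)) *
        (∫⁻ y in Set.Ioc (bd (k - 1)) (bd k),
            ((‖f y‖₊ : ℝ≥0∞)) ^ 2 / ENNReal.ofReal (y ^ 2)) ^ ((1 : ℝ) / 2)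
        ≤ ENNReal.ofReal (Real.exp ((|k| : ℤ) / 2 : ℝ)) *
          (ENNReal.ofReal (Real.exp (-(2*s)*(|(k:ℝ)|-1))) ^ ((1:ℝ)/2) * B k) :=
        mul_le_mul_right hJ2 _
    _ = A k * B k := by
        rw [hA, ENNReal.ofReal_rpow_of_pos (Real.exp_pos _), ← Real.exp_mul, ← mul_assoc,
          ← ENNReal.ofReal_mul (Real.exp_pos _).le, ← Real.exp_add]
        congr 3
        rw [Int.cast_abs]
        ring
  calc ∑' k : ℤ, ENNReal.ofReal (Real.exp ((|k| : ℤ) / 2 : ℝ)) *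
      (∫⁻ y in Set.Ioc (bd (k - 1)) (bd k),
          ((‖f y‖₊ : ℝ≥0∞)) ^ 2 / ENNReal.ofReal (y ^ 2)) ^ ((1 : ℝ) / 2)
      ≤ ∑' k, A k * B k := ENNReal.tsum_le_tsum key
  _ ≤ (∑' k, A k ^ (2:ℝ)) ^ ((1:ℝ)/2) * (∑' k, B k ^ (2:ℝ)) ^ ((1:ℝ)/2) := tsum_CS A B
  _ = _ := by
      congr 1
      · congr 1
        apply tsum_congr
        intro k
        rw [hA, ENNReal.ofReal_rpow_of_pos (Real.exp_pos _), ← Real.exp_mul,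
          div_mul_cancel₀ _ (two_ne_zero)]
      · congr 1
        rw [lintegral_Ioi_partition W]
        apply tsum_congr
        intro k
        rw [hB, ← ENNReal.rpow_mul]
        norm_num


lemma part2_besov {E : Type*} [NormedAddCommGroup E] (s : ℝ) (hs : 1 / 2 < s) (u : ℝ → E) :
    (∫⁻ y in Set.Ioi (0 : ℝ),
      ENNReal.ofReal ((1 + |Real.log y|) ^ (2 * (-s))) *
        ((‖u y‖₊ : ℝ≥0∞)) ^ 2 / ENNReal.ofReal (y ^ 2)) ^ ((1 : ℝ) / 2)
    ≤ (∑' k : ℤ, ENNReal.ofReal (Real.exp ((1-2*s) * |(k:ℝ)| + (2*s+1)))) ^ ((1:ℝ)/2) *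
      (⨆ R : {R : ℝ // Real.exp 1 < R},
        ENNReal.ofReal (1 / Real.log R) *
          ∫⁻ y in Set.Ioc (1 / (R : ℝ)) (R : ℝ),
            ((‖u y‖₊ : ℝ≥0∞)) ^ 2 / ENNReal.ofReal (y ^ 2)) ^ ((1 : ℝ) / 2) := by
  set h : ℝ → ℝ≥0∞ := fun y => ((‖u y‖₊ : ℝ≥0∞)) ^ 2 / ENNReal.ofReal (y ^ 2) with hh
  set S : ℝ≥0∞ := ⨆ R : {R : ℝ // Real.exp 1 < R},
      ENNReal.ofReal (1 / Real.log R) *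
        ∫⁻ y in Set.Ioc (1 / (R : ℝ)) (R : ℝ), h y with hS
  set K2 : ℝ≥0∞ := ∑' k : ℤ, ENNReal.ofReal (Real.exp ((1-2*s) * |(k:ℝ)| + (2*s+1))) with hK2
  -- step 1: for each k, ∫_{I_k} h ≤ e^{|k|+1} S
  have hIkS : ∀ k : ℤ, (∫⁻ y in Set.Ioc (bd (k-1)) (bd k), h y) ≤
      ENNReal.ofReal (Real.exp (|(k:ℝ)| + 1)) * S := by
    intro k
    set R : ℝ := Real.exp (Real.exp (|(k:ℝ)| + 1)) with hR
    have hlogR : Real.log R = Real.exp (|(k:ℝ)| + 1) := Real.log_exp _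
    have hlogRpos : 0 < Real.log R := by rw [hlogR]; exact Real.exp_pos _
    have h1 : (∫⁻ y in Set.Ioc (bd (k-1)) (bd k), h y) ≤
        ∫⁻ y in Set.Ioc (1/R) R, h y :=
      lintegral_mono' (Measure.restrict_mono (Ik_subset k) le_rfl) le_rfl
    have h2 : ENNReal.ofReal (1 / Real.log R) * ∫⁻ y in Set.Ioc (1/R) R, h y ≤ S := by
      rw [hS]
      exact le_iSup (fun R : {R : ℝ // Real.exp 1 < R} =>
        ENNReal.ofReal (1 / Real.log R) *
          ∫⁻ y in Set.Ioc (1 / (R : ℝ)) (R : ℝ), h y) ⟨R, Rk_gt k⟩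
    have hc0 : ENNReal.ofReal (1 / Real.log R) ≠ 0 :=
      (ENNReal.ofReal_pos.2 (by positivity)).ne'
    have hcinv : (ENNReal.ofReal (1 / Real.log R))⁻¹ = ENNReal.ofReal (Real.exp (|(k:ℝ)| + 1)) := by
      rw [one_div, ENNReal.ofReal_inv_of_pos hlogRpos, inv_inv, hlogR]
    calc (∫⁻ y in Set.Ioc (bd (k-1)) (bd k), h y) ≤ ∫⁻ y in Set.Ioc (1/R) R, h y := h1
    _ = (ENNReal.ofReal (1 / Real.log R))⁻¹ *
        (ENNReal.ofReal (1 / Real.log R) * ∫⁻ y in Set.Ioc (1/R) R, h y) := by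
        rw [← mul_assoc, ENNReal.inv_mul_cancel hc0 ENNReal.ofReal_ne_top, one_mul]
    _ ≤ (ENNReal.ofReal (1 / Real.log R))⁻¹ * S := mul_le_mul_right h2 _
    _ = ENNReal.ofReal (Real.exp (|(k:ℝ)| + 1)) * S := by rw [hcinv]
  -- step 2: pointwise weight bound and per-k integral bound for V
  have hVk : ∀ k : ℤ, (∫⁻ y in Set.Ioc (bd (k-1)) (bd k),
        ENNReal.ofReal ((1 + |Real.log y|) ^ (2 * (-s))) * ((‖u y‖₊ : ℝ≥0∞)) ^ 2 /
          ENNReal.ofReal (y ^ 2)) ≤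
      ENNReal.ofReal (Real.exp ((1-2*s) * |(k:ℝ)| + (2*s+1))) * S := by
    intro k
    have hpt : ∀ y ∈ Set.Ioc (bd (k-1)) (bd k),
        ENNReal.ofReal ((1 + |Real.log y|) ^ (2 * (-s))) * ((‖u y‖₊ : ℝ≥0∞)) ^ 2 /
          ENNReal.ofReal (y ^ 2) ≤
        ENNReal.ofReal (Real.exp ((|(k:ℝ)|-1) * (2 * (-s)))) * h y := by
      intro y hy
      have hw := weight_lb k hy
      have hrw : (1 + |Real.log y|) ^ (2 * (-s)) ≤ Real.exp ((|(k:ℝ)|-1) * (2 * (-s))) := by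
        rw [Real.exp_mul]
        exact Real.rpow_le_rpow_of_nonpos (Real.exp_pos _) hw (by linarith)
      rw [mul_div_assoc]
      exact mul_le_mul_left (ENNReal.ofReal_le_ofReal hrw) (h y)
    calc (∫⁻ y in Set.Ioc (bd (k-1)) (bd k),
          ENNReal.ofReal ((1 + |Real.log y|) ^ (2 * (-s))) * ((‖u y‖₊ : ℝ≥0∞)) ^ 2 /
            ENNReal.ofReal (y ^ 2))
        ≤ ∫⁻ y in Set.Ioc (bd (k-1)) (bd k),
            ENNReal.ofReal (Real.exp ((|(k:ℝ)|-1) * (2 * (-s)))) * h y :=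
        lintegral_mono_ae ((ae_restrict_of_forall_mem measurableSet_Ioc) hpt)
    _ = ENNReal.ofReal (Real.exp ((|(k:ℝ)|-1) * (2 * (-s)))) *
          ∫⁻ y in Set.Ioc (bd (k-1)) (bd k), h y :=
        lintegral_const_mul' _ _ ENNReal.ofReal_ne_top
    _ ≤ ENNReal.ofReal (Real.exp ((|(k:ℝ)|-1) * (2 * (-s)))) *
          (ENNReal.ofReal (Real.exp (|(k:ℝ)| + 1)) * S) := mul_le_mul_right (hIkS k) _
    _ = ENNReal.ofReal (Real.exp ((1-2*s) * |(k:ℝ)| + (2*s+1))) * S := by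
        rw [← mul_assoc, ← ENNReal.ofReal_mul (Real.exp_pos _).le, ← Real.exp_add]
        congr 3
        ring
  -- step 3: sum up
  have hV : (∫⁻ y in Set.Ioi (0 : ℝ),
      ENNReal.ofReal ((1 + |Real.log y|) ^ (2 * (-s))) *
        ((‖u y‖₊ : ℝ≥0∞)) ^ 2 / ENNReal.ofReal (y ^ 2)) ≤ K2 * S := by
    rw [lintegral_Ioi_partition, hK2, ← ENNReal.tsum_mul_right]
    exact ENNReal.tsum_le_tsum hVk
  calc (∫⁻ y in Set.Ioi (0 : ℝ),
      ENNReal.ofReal ((1 + |Real.log y|) ^ (2 * (-s))) *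
        ((‖u y‖₊ : ℝ≥0∞)) ^ 2 / ENNReal.ofReal (y ^ 2)) ^ ((1 : ℝ) / 2)
      ≤ (K2 * S) ^ ((1:ℝ)/2) := ENNReal.rpow_le_rpow hV (by norm_num)
  _ = K2 ^ ((1:ℝ)/2) * S ^ ((1:ℝ)/2) := ENNReal.mul_rpow_of_nonneg _ _ (by norm_num)

/-- The continuous inclusions `L^{2,s} ⊂ B` and `B* ⊂ L^{2,-s}` for `s > 1/2`. -/
theorem besov_inclusions {E : Type*} [NormedAddCommGroup E] (s : ℝ) (hs : 1 / 2 < s) :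
    ∃ C : ℝ≥0∞, 0 < C ∧ C ≠ ⊤ ∧
      (∀ f : ℝ → E, Bnorm f ≤ C * Lnorm s f) ∧
      (∀ u : ℝ → E, Lnorm (-s) u ≤ C * Bstarnorm u) := by
  have hc : (1:ℝ) - 2*s < 0 := by linarith
  set K1 : ℝ≥0∞ := ∑' k : ℤ, ENNReal.ofReal (Real.exp ((1-2*s) * |(k:ℝ)| + 2*s)) with hK1
  set K2 : ℝ≥0∞ := ∑' k : ℤ, ENNReal.ofReal (Real.exp ((1-2*s) * |(k:ℝ)| + (2*s+1))) with hK2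
  have hK1top : K1 ≠ ⊤ := tsum_exp_abs_ne_top hc _
  have hK2top : K2 ≠ ⊤ := tsum_exp_abs_ne_top hc _
  set C : ℝ≥0∞ := K1 ^ ((1:ℝ)/2) + K2 ^ ((1:ℝ)/2) + 1 with hC
  have hC1 : K1 ^ ((1:ℝ)/2) ≤ C := le_trans le_self_add le_self_add
  have hC2 : K2 ^ ((1:ℝ)/2) ≤ C := le_trans le_add_self le_self_add
  refine ⟨C, ?_, ?_, ?_, ?_⟩
  · exact lt_of_lt_of_le zero_lt_one le_add_self
  · rw [hC]
    apply ENNReal.add_ne_top.2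
    refine ⟨ENNReal.add_ne_top.2 ⟨?_, ?_⟩, ENNReal.one_ne_top⟩
    · exact ENNReal.rpow_ne_top_of_nonneg (by norm_num) hK1top
    · exact ENNReal.rpow_ne_top_of_nonneg (by norm_num) hK2top
  · intro f
    calc Bnorm f ≤ K1 ^ ((1:ℝ)/2) * Lnorm s f := by
          simp only [Bnorm, Lnorm, hK1]
          exact part1_besov s hs f
    _ ≤ C * Lnorm s f := mul_le_mul_left hC1 _
  · intro u
    calc Lnorm (-s) u ≤ K2 ^ ((1:ℝ)/2) * Bstarnorm u := by
          simp only [Lnorm, Bstarnorm, hK2]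
          exact part2_besov s hs u
    _ ≤ C * Bstarnorm u := mul_le_mul_left hC2 _
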